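/- Let d \geq 2 and n > 10 d^3 \log d with d dividing n-1. Then there exists an n-edge-coloured multigraph G in which each colour class is a disjoint union of non-trivial cliques spanning at least (2 + 1/d)(n-1) vertices, the maximum edge multiplicity of G is at most n/(2d) + O(n/d^2), and G contains no matching of size n. -/

import Mathlib

open Finset
open scoped Classical

section Defs

variable {V C E : Type*}

/-- The two endpoints of an edge of a multigraph given by endpoint functions `e₁ e₂`. -/
def edgeEnds [DecidableEq V] (e₁ e₂ : E → V) (e : E) : Finset V := {e₁ e, e₂ e}

/-- A finite set of edges is a matching: all edges are non-loops and pairwise vertex-disjoint. -/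
def IsMatchingE [DecidableEq V] (e₁ e₂ : E → V) (M : Finset E) : Prop :=
  (∀ e ∈ M, e₁ e ≠ e₂ e) ∧
  ∀ a ∈ M, ∀ b ∈ M, a ≠ b → Disjoint (edgeEnds e₁ e₂ a) (edgeEnds e₁ e₂ b)

/-- A set of edges is rainbow: all its edges have pairwise distinct colours. -/
def IsRainbow (col : E → C) (M : Finset E) : Prop := Set.InjOn col ↑M

/-- The colour class of colour `c`: the set of all edges of colour `c`. -/
noncomputable def colourClass [Fintype E] (col : E → C) (c : C) : Finset E :=
  Finset.univ.filter fun e => col e = c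

/-- The set of vertices covered by a set of edges `M`. -/
def matchedVerts [DecidableEq V] (e₁ e₂ : E → V) (M : Finset E) : Finset V :=
  M.biUnion (edgeEnds e₁ e₂)

/-- The set of vertices spanned by the colour class of `c`
(i.e. incident to at least one edge of colour `c`). -/
noncomputable def spannedVerts [Fintype V] [DecidableEq V] [Fintype E]
    (e₁ e₂ : E → V) (col : E → C) (c : C) : Finset V :=
  Finset.univ.filter fun v => ∃ e, col e = c ∧ (e₁ e = v ∨ e₂ e = v)

/-- `u` and `v` are distinct vertices joined by an edge of colour `c`. -/
def adjOfColour (e₁ e₂ : E → V) (col : E → C) (c : C) (u v : V) : Prop :=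
  u ≠ v ∧ ∃ e, col e = c ∧ ((e₁ e = u ∧ e₂ e = v) ∨ (e₁ e = v ∧ e₂ e = u))

/-- The colour class of `c` is a vertex-disjoint union of (non-trivial) cliques:
whenever `uv` and `vw` are edges of colour `c` with `u ≠ w`, also `uw` is an
edge of colour `c`. -/
def IsCliqueUnion (e₁ e₂ : E → V) (col : E → C) (c : C) : Prop :=
  ∀ u v w, adjOfColour e₁ e₂ col c u v → adjOfColour e₁ e₂ col c v w → u ≠ w →
    adjOfColour e₁ e₂ col c u w

end Defs

namespace Stmt16Aux


lemma cast_eq_zero {d a : ℕ} (ha : a ≤ 2*d) (h : (a : ZMod (2*d+1)) = 0) : a = 0 := by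
  rw [ZMod.natCast_eq_zero_iff] at h
  rcases Nat.eq_zero_or_pos a with h0 | h0
  · exact h0
  · exact absurd (Nat.le_of_dvd h0 h) (by omega)

lemma cast_inj {d a b : ℕ} (ha : a < 2*d+1) (hb : b < 2*d+1)
    (h : (a : ZMod (2*d+1)) = b) : a = b := by
  have h2 := congrArg ZMod.val h
  rwa [ZMod.val_cast_of_lt ha, ZMod.val_cast_of_lt hb] at h2

lemma shift_add_inj {d a b : ℕ} (z : ZMod (2*d+1)) (ha : a < 2*d+1) (hb : b < 2*d+1)
    (h : z + (a : ZMod (2*d+1)) = z + b) : a = b :=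
  cast_inj ha hb (by rwa [add_right_inj] at h)

lemma shift_sub_inj {d a b : ℕ} (z : ZMod (2*d+1)) (ha : a < 2*d+1) (hb : b < 2*d+1)
    (h : z - (a : ZMod (2*d+1)) = z - b) : a = b :=
  cast_inj ha hb (by rwa [sub_right_inj] at h)

lemma shift_add_ne_sub {d a b : ℕ} (z : ZMod (2*d+1)) (ha1 : 1 ≤ a) (ha : a ≤ d)
    (hb1 : 1 ≤ b) (hb : b ≤ d) : z + (a : ZMod (2*d+1)) ≠ z - b := by
  intro h
  have h2 : ((a + b : ℕ) : ZMod (2*d+1)) = 0 := by push_cast; linear_combination h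
  have := cast_eq_zero (by omega) h2
  omega

lemma shift_add_ne_self {d a : ℕ} (z : ZMod (2*d+1)) (ha1 : 1 ≤ a) (ha : a ≤ 2*d) :
    z + (a : ZMod (2*d+1)) ≠ z := by
  intro h
  have h2 : ((a : ℕ) : ZMod (2*d+1)) = 0 := by linear_combination h
  have := cast_eq_zero ha h2; omega

lemma shift_sub_ne_self {d a : ℕ} (z : ZMod (2*d+1)) (ha1 : 1 ≤ a) (ha : a ≤ 2*d) :
    z - (a : ZMod (2*d+1)) ≠ z := by
  intro h
  have h2 : ((a : ℕ) : ZMod (2*d+1)) = 0 := by linear_combination -h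
  have := cast_eq_zero ha h2; omega

/-! ### the colour structure -/

def ic (d c : ℕ) : ZMod (2*d+1) := ((c % (d*(2*d+1))) % (2*d+1) : ℕ)

def jc (d c : ℕ) : ℕ := (c % (d*(2*d+1))) / (2*d+1) + 1

lemma jc_ge (d c : ℕ) : 1 ≤ jc d c := Nat.le_add_left 1 _

lemma jc_le {d : ℕ} (hd : 0 < d) (c : ℕ) : jc d c ≤ d := by
  have h1 : c % (d*(2*d+1)) < d*(2*d+1) := Nat.mod_lt _ (by positivity)
  have h2 : (c % (d*(2*d+1))) / (2*d+1) < d := by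
    rw [Nat.div_lt_iff_lt_mul (by omega)]; exact h1
  unfold jc; omega

lemma ic_mod (d c : ℕ) : ic d (c % (d*(2*d+1))) = ic d c := by
  unfold ic; rw [Nat.mod_mod_of_dvd c dvd_rfl]

lemma jc_mod (d c : ℕ) : jc d (c % (d*(2*d+1))) = jc d c := by
  unfold jc; rw [Nat.mod_mod_of_dvd c dvd_rfl]

def ends (d c k : ℕ) : ZMod (2*d+1) × ZMod (2*d+1) :=
  if k < d then
    (ic d c + ((k+1 : ℕ) : ZMod (2*d+1)), ic d c - ((k+1 : ℕ) : ZMod (2*d+1)))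
  else if k = d then (ic d c, ic d c + ((jc d c : ℕ) : ZMod (2*d+1)))
  else (ic d c, ic d c - ((jc d c : ℕ) : ZMod (2*d+1)))

lemma ends_mod (d c k : ℕ) : ends d (c % (d*(2*d+1))) k = ends d c k := by
  unfold ends; rw [ic_mod, jc_mod]

lemma ends_ne {d : ℕ} (hd : 0 < d) (c k : ℕ) : (ends d c k).1 ≠ (ends d c k).2 := by
  have hj1 := jc_ge d c; have hj2 := jc_le hd c
  unfold ends
  split_ifs with h1 h2
  · exact shift_add_ne_sub _ (by omega) (by omega) (by omega) (by omega)
  · exact fun h => shift_add_ne_self _ hj1 (by omega) h.symm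
  · exact fun h => shift_sub_ne_self _ hj1 (by omega) h.symm

lemma ends_cases {d : ℕ} (c k : ℕ) {x y : ZMod (2*d+1)}
    (h : ends d c k = (x, y) ∨ ends d c k = (y, x)) :
    (k < d ∧ ((x = ic d c + ((k+1 : ℕ) : ZMod (2*d+1)) ∧ y = ic d c - ((k+1 : ℕ) : ZMod (2*d+1))) ∨
              (y = ic d c + ((k+1 : ℕ) : ZMod (2*d+1)) ∧ x = ic d c - ((k+1 : ℕ) : ZMod (2*d+1))))) ∨
    (k = d ∧ ((x = ic d c ∧ y = ic d c + ((jc d c : ℕ) : ZMod (2*d+1))) ∨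
              (y = ic d c ∧ x = ic d c + ((jc d c : ℕ) : ZMod (2*d+1))))) ∨
    (¬ k < d ∧ k ≠ d ∧ ((x = ic d c ∧ y = ic d c - ((jc d c : ℕ) : ZMod (2*d+1))) ∨
              (y = ic d c ∧ x = ic d c - ((jc d c : ℕ) : ZMod (2*d+1))))) := by
  unfold ends at h
  split_ifs at h with h1 h2
  · refine Or.inl ⟨h1, ?_⟩
    rcases h with h | h
    · exact Or.inl ⟨(congrArg Prod.fst h).symm, (congrArg Prod.snd h).symm⟩
    · exact Or.inr ⟨(congrArg Prod.fst h).symm, (congrArg Prod.snd h).symm⟩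
  · refine Or.inr (Or.inl ⟨h2, ?_⟩)
    rcases h with h | h
    · exact Or.inl ⟨(congrArg Prod.fst h).symm, (congrArg Prod.snd h).symm⟩
    · exact Or.inr ⟨(congrArg Prod.fst h).symm, (congrArg Prod.snd h).symm⟩
  · refine Or.inr (Or.inr ⟨h1, h2, ?_⟩)
    rcases h with h | h
    · exact Or.inl ⟨(congrArg Prod.fst h).symm, (congrArg Prod.snd h).symm⟩
    · exact Or.inr ⟨(congrArg Prod.fst h).symm, (congrArg Prod.snd h).symm⟩

lemma ends_k_unique {d : ℕ} (hd : 0 < d) {c k k' : ℕ} {x y : ZMod (2*d+1)}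
    (hk : k < d+2) (hk' : k' < d+2) (hxy : x ≠ y)
    (h : ends d c k = (x, y) ∨ ends d c k = (y, x))
    (h' : ends d c k' = (x, y) ∨ ends d c k' = (y, x)) : k = k' := by
  have hj1 := jc_ge d c; have hj2 := jc_le hd c
  rcases ends_cases c k h with ⟨hkd, hA⟩ | ⟨hkd, hA⟩ | ⟨hkd1, hkd2, hA⟩ <;>
    rcases ends_cases c k' h' with ⟨hkd', hB⟩ | ⟨hkd', hB⟩ | ⟨hkd1', hkd2', hB⟩
  · -- both matching edges
    rcases hA with ⟨ha1, ha2⟩ | ⟨ha1, ha2⟩ <;> rcases hB with ⟨hb1, hb2⟩ | ⟨hb1, hb2⟩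
    · have := shift_add_inj (ic d c) (by omega) (by omega) (ha1.symm.trans hb1); omega
    · exact absurd (ha1.symm.trans hb2) (shift_add_ne_sub _ (by omega) (by omega) (by omega) (by omega))
    · exact absurd (hb1.symm.trans ha2) (shift_add_ne_sub _ (by omega) (by omega) (by omega) (by omega))
    · have := shift_add_inj (ic d c) (by omega) (by omega) (ha1.symm.trans hb1); omega
  · -- matching vs +triangle
    exfalso
    rcases hA with ⟨ha1, ha2⟩ | ⟨ha1, ha2⟩ <;> rcases hB with ⟨hb1, hb2⟩ | ⟨hb1, hb2⟩
    · exact shift_add_ne_self _ (by omega) (by omega) (ha1.symm.trans hb1)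
    · exact shift_sub_ne_self _ (by omega) (by omega) (ha2.symm.trans hb1)
    · exact shift_sub_ne_self _ (by omega) (by omega) (ha2.symm.trans hb1)
    · exact shift_add_ne_self _ (by omega) (by omega) (ha1.symm.trans hb1)
  · -- matching vs -triangle
    exfalso
    rcases hA with ⟨ha1, ha2⟩ | ⟨ha1, ha2⟩ <;> rcases hB with ⟨hb1, hb2⟩ | ⟨hb1, hb2⟩
    · exact shift_add_ne_self _ (by omega) (by omega) (ha1.symm.trans hb1)
    · exact shift_sub_ne_self _ (by omega) (by omega) (ha2.symm.trans hb1)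
    · exact shift_sub_ne_self _ (by omega) (by omega) (ha2.symm.trans hb1)
    · exact shift_add_ne_self _ (by omega) (by omega) (ha1.symm.trans hb1)
  · -- +triangle vs matching
    exfalso
    rcases hA with ⟨ha1, ha2⟩ | ⟨ha1, ha2⟩ <;> rcases hB with ⟨hb1, hb2⟩ | ⟨hb1, hb2⟩
    · exact shift_add_ne_self _ (by omega) (by omega) (hb1.symm.trans ha1)
    · exact shift_sub_ne_self _ (by omega) (by omega) (hb2.symm.trans ha1)
    · exact shift_sub_ne_self _ (by omega) (by omega) (hb2.symm.trans ha1)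
    · exact shift_add_ne_self _ (by omega) (by omega) (hb1.symm.trans ha1)
  · omega
  · -- +triangle vs -triangle
    exfalso
    rcases hA with ⟨ha1, ha2⟩ | ⟨ha1, ha2⟩ <;> rcases hB with ⟨hb1, hb2⟩ | ⟨hb1, hb2⟩
    · exact shift_add_ne_sub _ hj1 hj2 hj1 hj2 (ha2.symm.trans hb2)
    · exact hxy (ha1.trans hb1.symm)
    · exact hxy (hb1.trans ha1.symm)
    · exact shift_add_ne_sub _ hj1 hj2 hj1 hj2 (ha2.symm.trans hb2)
  · -- -triangle vs matching
    exfalso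
    rcases hA with ⟨ha1, ha2⟩ | ⟨ha1, ha2⟩ <;> rcases hB with ⟨hb1, hb2⟩ | ⟨hb1, hb2⟩
    · exact shift_add_ne_self _ (by omega) (by omega) (hb1.symm.trans ha1)
    · exact shift_sub_ne_self _ (by omega) (by omega) (hb2.symm.trans ha1)
    · exact shift_sub_ne_self _ (by omega) (by omega) (hb2.symm.trans ha1)
    · exact shift_add_ne_self _ (by omega) (by omega) (hb1.symm.trans ha1)
  · -- -triangle vs +triangle
    exfalso
    rcases hA with ⟨ha1, ha2⟩ | ⟨ha1, ha2⟩ <;> rcases hB with ⟨hb1, hb2⟩ | ⟨hb1, hb2⟩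
    · exact shift_add_ne_sub _ hj1 hj2 hj1 hj2 (hb2.symm.trans ha2)
    · exact hxy (ha1.trans hb1.symm)
    · exact hxy (hb1.trans ha1.symm)
    · exact shift_add_ne_sub _ hj1 hj2 hj1 hj2 (hb2.symm.trans ha2)
  · omega

/-! ### the adjacency relation of one colour on one copy -/

def Rc (d c : ℕ) (x y : ZMod (2*d+1)) : Prop :=
  ∃ k, k < d+2 ∧ (ends d c k = (x, y) ∨ ends d c k = (y, x))

lemma Rc.symm {d c : ℕ} {x y : ZMod (2*d+1)} (h : Rc d c x y) : Rc d c y x := by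
  obtain ⟨k, hk, h⟩ := h
  exact ⟨k, hk, h.elim Or.inr Or.inl⟩

lemma Rc_pair {d : ℕ} (hd : 0 < d) (c : ℕ) {a : ℕ} (h1 : 1 ≤ a) (h2 : a ≤ d) :
    Rc d c (ic d c + (a : ZMod (2*d+1))) (ic d c - (a : ZMod (2*d+1))) := by
  refine ⟨a - 1, by omega, Or.inl ?_⟩
  unfold ends
  rw [if_pos (by omega : a - 1 < d)]
  have h3 : a - 1 + 1 = a := by omega
  rw [h3]

lemma Rc_tri_add {d : ℕ} (c : ℕ) :
    Rc d c (ic d c) (ic d c + ((jc d c : ℕ) : ZMod (2*d+1))) := by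
  refine ⟨d, by omega, Or.inl ?_⟩
  unfold ends
  rw [if_neg (by omega), if_pos rfl]

lemma Rc_tri_sub {d : ℕ} (c : ℕ) :
    Rc d c (ic d c) (ic d c - ((jc d c : ℕ) : ZMod (2*d+1))) := by
  refine ⟨d+1, by omega, Or.inl ?_⟩
  unfold ends
  rw [if_neg (by omega), if_neg (by omega)]

lemma Rc_tri_pm {d : ℕ} (hd : 0 < d) (c : ℕ) :
    Rc d c (ic d c + ((jc d c : ℕ) : ZMod (2*d+1))) (ic d c - ((jc d c : ℕ) : ZMod (2*d+1))) :=
  Rc_pair hd c (jc_ge d c) (jc_le hd c)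

lemma nb {d c : ℕ} (hd : 0 < d) {y w : ZMod (2*d+1)} (h : Rc d c y w) :
    (y = ic d c ∧ (w = ic d c + ((jc d c : ℕ) : ZMod (2*d+1)) ∨
                   w = ic d c - ((jc d c : ℕ) : ZMod (2*d+1)))) ∨
    (∃ a : ℕ, 1 ≤ a ∧ a ≤ d ∧
      ((y = ic d c + (a : ZMod (2*d+1)) ∧
          (w = ic d c - (a : ZMod (2*d+1)) ∨ (a = jc d c ∧ w = ic d c))) ∨
       (y = ic d c - (a : ZMod (2*d+1)) ∧
          (w = ic d c + (a : ZMod (2*d+1)) ∨ (a = jc d c ∧ w = ic d c))))) := by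
  obtain ⟨k, hk, h⟩ := h
  rcases ends_cases c k h with ⟨hkd, hA⟩ | ⟨hkd, hA⟩ | ⟨hkd1, hkd2, hA⟩
  · rcases hA with ⟨h1, h2⟩ | ⟨h1, h2⟩
    · exact Or.inr ⟨k+1, by omega, by omega, Or.inl ⟨h1, Or.inl h2⟩⟩
    · exact Or.inr ⟨k+1, by omega, by omega, Or.inr ⟨h2, Or.inl h1⟩⟩
  · rcases hA with ⟨h1, h2⟩ | ⟨h1, h2⟩
    · exact Or.inl ⟨h1, Or.inl h2⟩
    · exact Or.inr ⟨jc d c, jc_ge d c, jc_le hd c, Or.inl ⟨h2, Or.inr ⟨rfl, h1⟩⟩⟩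
  · rcases hA with ⟨h1, h2⟩ | ⟨h1, h2⟩
    · exact Or.inl ⟨h1, Or.inr h2⟩
    · exact Or.inr ⟨jc d c, jc_ge d c, jc_le hd c, Or.inr ⟨h2, Or.inr ⟨rfl, h1⟩⟩⟩

lemma Rc_trans {d c : ℕ} (hd : 0 < d) {x y z : ZMod (2*d+1)}
    (hxy : Rc d c x y) (hyz : Rc d c y z) (hxz : x ≠ z) : Rc d c x z := by
  have hj1 := jc_ge d c; have hj2 := jc_le hd c
  rcases nb hd hxy.symm with ⟨hy, hx⟩ | ⟨a, ha1, ha2, hA⟩ <;>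
    rcases nb hd hyz with ⟨hy', hz⟩ | ⟨b, hb1, hb2, hB⟩
  · -- y = ic in both
    rcases hx with hx | hx <;> rcases hz with hz | hz
    · exact absurd (hx.trans hz.symm) hxz
    · rw [hx, hz]; exact Rc_tri_pm hd c
    · rw [hx, hz]; exact (Rc_tri_pm hd c).symm
    · exact absurd (hx.trans hz.symm) hxz
  · -- y = ic and y = ic ± b : contradiction
    exfalso
    rcases hB with ⟨hyb, _⟩ | ⟨hyb, _⟩
    · exact shift_add_ne_self _ hb1 (by omega) (hyb.symm.trans hy)
    · exact shift_sub_ne_self _ hb1 (by omega) (hyb.symm.trans hy)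
  · -- y = ic ± a and y = ic : contradiction
    exfalso
    rcases hA with ⟨hya, _⟩ | ⟨hya, _⟩
    · exact shift_add_ne_self _ ha1 (by omega) (hya.symm.trans hy')
    · exact shift_sub_ne_self _ ha1 (by omega) (hya.symm.trans hy')
  · -- y = ic ± a = ic ± b
    rcases hA with ⟨hya, hxa⟩ | ⟨hya, hxa⟩ <;> rcases hB with ⟨hyb, hzb⟩ | ⟨hyb, hzb⟩
    · -- both +
      have hab : a = b := shift_add_inj (ic d c) (by omega) (by omega) (hya.symm.trans hyb)
      subst hab
      rcases hxa with hx | ⟨haj, hx⟩ <;> rcases hzb with hz | ⟨hbj, hz⟩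
      · exact absurd (hx.trans hz.symm) hxz
      · rw [hx, hz, hbj]; exact (Rc_tri_sub c).symm
      · rw [hx, hz, haj]; exact Rc_tri_sub c
      · exact absurd (hx.trans hz.symm) hxz
    · -- + and - : contradiction
      exact absurd (hya.symm.trans hyb) (shift_add_ne_sub _ ha1 ha2 hb1 hb2)
    · -- - and + : contradiction
      exact absurd (hyb.symm.trans hya) (shift_add_ne_sub _ hb1 hb2 ha1 ha2)
    · -- both -
      have hab : a = b := shift_sub_inj (ic d c) (by omega) (by omega) (hya.symm.trans hyb)
      subst hab
      rcases hxa with hx | ⟨haj, hx⟩ <;> rcases hzb with hz | ⟨hbj, hz⟩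
      · exact absurd (hx.trans hz.symm) hxz
      · rw [hx, hz, hbj]; exact (Rc_tri_add c).symm
      · rw [hx, hz, haj]; exact Rc_tri_add c
      · exact absurd (hx.trans hz.symm) hxz


/-! ### the multigraph -/

abbrev Vt (d t : ℕ) := Fin t × ZMod (2*d+1)
abbrev Eg (d n t : ℕ) := Fin t × Fin n × Fin (d+2)

def E1 (d n t : ℕ) : Eg d n t → Vt d t := fun e => (e.1, (ends d e.2.1.val e.2.2.val).1)
def E2 (d n t : ℕ) : Eg d n t → Vt d t := fun e => (e.1, (ends d e.2.1.val e.2.2.val).2)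
def colE (d n t : ℕ) : Eg d n t → Fin n := fun e => e.2.1

lemma E_ne (d n t : ℕ) (hd : 0 < d) (e : Eg d n t) : E1 d n t e ≠ E2 d n t e := by
  intro h
  exact ends_ne hd e.2.1.val e.2.2.val (congrArg Prod.snd h)

lemma adjE_iff (d n t : ℕ) (c : Fin n) (u v : Vt d t) :
    adjOfColour (E1 d n t) (E2 d n t) (colE d n t) c u v ↔
      (u ≠ v ∧ u.1 = v.1 ∧ Rc d c.val u.2 v.2) := by
  constructor
  · rintro ⟨hne, e, hcol, h⟩
    have hcv : e.2.1 = c := hcol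
    refine ⟨hne, ?_, e.2.2.val, e.2.2.isLt, ?_⟩
    · rcases h with ⟨h1, h2⟩ | ⟨h1, h2⟩
      · have f1 : e.1 = u.1 := congrArg Prod.fst h1
        have f2 : e.1 = v.1 := congrArg Prod.fst h2
        exact f1.symm.trans f2
      · have f1 : e.1 = v.1 := congrArg Prod.fst h1
        have f2 : e.1 = u.1 := congrArg Prod.fst h2
        exact f2.symm.trans f1
    · rw [← hcv]
      rcases h with ⟨h1, h2⟩ | ⟨h1, h2⟩
      · have f1 : (ends d e.2.1.val e.2.2.val).1 = u.2 := congrArg Prod.snd h1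
        have f2 : (ends d e.2.1.val e.2.2.val).2 = v.2 := congrArg Prod.snd h2
        exact Or.inl (Prod.ext_iff.mpr ⟨f1, f2⟩)
      · have f1 : (ends d e.2.1.val e.2.2.val).1 = v.2 := congrArg Prod.snd h1
        have f2 : (ends d e.2.1.val e.2.2.val).2 = u.2 := congrArg Prod.snd h2
        exact Or.inr (Prod.ext_iff.mpr ⟨f1, f2⟩)
  · rintro ⟨hne, h1, k, hk, h⟩
    refine ⟨hne, ⟨(u.1, c, ⟨k, hk⟩), rfl, ?_⟩⟩
    rcases h with h | h
    · have f1 : (ends d c.val k).1 = u.2 := congrArg Prod.fst h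
      have f2 : (ends d c.val k).2 = v.2 := congrArg Prod.snd h
      exact Or.inl ⟨Prod.ext_iff.mpr ⟨rfl, f1⟩, Prod.ext_iff.mpr ⟨h1, f2⟩⟩
    · have f1 : (ends d c.val k).1 = v.2 := congrArg Prod.fst h
      have f2 : (ends d c.val k).2 = u.2 := congrArg Prod.snd h
      exact Or.inr ⟨Prod.ext_iff.mpr ⟨h1, f1⟩, Prod.ext_iff.mpr ⟨rfl, f2⟩⟩

lemma cliqueE (d n t : ℕ) (hd : 0 < d) (c : Fin n) :
    IsCliqueUnion (E1 d n t) (E2 d n t) (colE d n t) c := by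
  intro u v w h1 h2 hne
  rw [adjE_iff] at h1 h2 ⊢
  obtain ⟨h1ne, h1f, h1R⟩ := h1
  obtain ⟨h2ne, h2f, h2R⟩ := h2
  refine ⟨hne, h1f.trans h2f, Rc_trans hd h1R h2R ?_⟩
  intro hh
  exact hne (Prod.ext_iff.mpr ⟨h1f.trans h2f, hh⟩)

lemma spanE (d n t : ℕ) (hd : 0 < d) (c : Fin n) (v : Vt d t) :
    ∃ e : Eg d n t, colE d n t e = c ∧ (E1 d n t e = v ∨ E2 d n t e = v) := by
  obtain ⟨s, z⟩ := v
  have key : ∃ k, k < d+2 ∧ ((ends d c.val k).1 = z ∨ (ends d c.val k).2 = z) := by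
    by_cases hz : z = ic d c.val
    · refine ⟨d, by omega, Or.inl ?_⟩
      unfold ends; rw [if_neg (by omega), if_pos rfl]
      exact hz.symm
    · have hδ0 : z - ic d c.val ≠ 0 := fun h => hz (by rwa [sub_eq_zero] at h)
      have hv1 : (z - ic d c.val).val < 2*d+1 := ZMod.val_lt _
      have hv0 : (z - ic d c.val).val ≠ 0 := fun h => hδ0 ((ZMod.val_eq_zero _).mp h)
      have hcast : (((z - ic d c.val).val : ℕ) : ZMod (2*d+1)) = z - ic d c.val :=
        ZMod.natCast_zmod_val _
      by_cases hle : (z - ic d c.val).val ≤ d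
      · refine ⟨(z - ic d c.val).val - 1, by omega, Or.inl ?_⟩
        unfold ends
        rw [if_pos (by omega : (z - ic d c.val).val - 1 < d)]
        show ic d c.val + (((z - ic d c.val).val - 1 + 1 : ℕ) : ZMod (2*d+1)) = z
        have h3 : (z - ic d c.val).val - 1 + 1 = (z - ic d c.val).val := by omega
        rw [h3, hcast]; ring
      · refine ⟨2*d - (z - ic d c.val).val, by omega, Or.inr ?_⟩
        unfold ends
        rw [if_pos (by omega : 2*d - (z - ic d c.val).val < d)]
        show ic d c.val - ((2*d - (z - ic d c.val).val + 1 : ℕ) : ZMod (2*d+1)) = z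
        have h4 : 2*d - (z - ic d c.val).val + 1 = 2*d+1 - (z - ic d c.val).val := by omega
        rw [h4, Nat.cast_sub (by omega : (z - ic d c.val).val ≤ 2*d+1), hcast]
        have h5 : ((2*d+1 : ℕ) : ZMod (2*d+1)) = 0 := by
          simpa using ZMod.natCast_self (2*d+1)
        rw [h5]; ring
  obtain ⟨k, hk, h⟩ := key
  refine ⟨(s, c, ⟨k, hk⟩), rfl, ?_⟩
  rcases h with h | h
  · exact Or.inl (Prod.ext_iff.mpr ⟨rfl, h⟩)
  · exact Or.inr (Prod.ext_iff.mpr ⟨rfl, h⟩)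

lemma matchE (d n t : ℕ) (hd : 0 < d) (M : Finset (Eg d n t))
    (hM : IsMatchingE (E1 d n t) (E2 d n t) M) : M.card ≤ t * d := by
  obtain ⟨hloop, hdisj⟩ := hM
  rw [Finset.card_eq_sum_card_fiberwise (f := fun e : Eg d n t => e.1)
    (t := (univ : Finset (Fin t))) (fun e _ => mem_univ _)]
  have hfib : ∀ s : Fin t, (M.filter fun e => e.1 = s).card ≤ d := by
    intro s
    set Ms := M.filter fun e => e.1 = s with hMs
    have hdcard : (matchedVerts (E1 d n t) (E2 d n t) Ms).card = 2 * Ms.card := by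
      unfold matchedVerts
      rw [card_biUnion (fun a ha b hb hab =>
        hdisj a (mem_of_mem_filter a ha) b (mem_of_mem_filter b hb) hab)]
      have hcp : ∀ e ∈ Ms, (edgeEnds (E1 d n t) (E2 d n t) e).card = 2 :=
        fun e he => card_pair (hloop e (mem_of_mem_filter e he))
      rw [Finset.sum_congr rfl hcp, sum_const, smul_eq_mul, mul_comm]
    have hsub : matchedVerts (E1 d n t) (E2 d n t) Ms ⊆ ({s} : Finset (Fin t)) ×ˢ univ := by
      intro w hw
      rw [matchedVerts, mem_biUnion] at hw
      obtain ⟨e, he, hwe⟩ := hw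
      have hes : e.1 = s := (mem_filter.mp he).2
      rw [edgeEnds, mem_insert, mem_singleton] at hwe
      rw [mem_product]
      rcases hwe with h | h <;> rw [h] <;> exact ⟨mem_singleton.mpr hes, mem_univ _⟩
    have hcard2 := card_le_card hsub
    rw [hdcard] at hcard2
    have hprod : (({s} : Finset (Fin t)) ×ˢ (univ : Finset (ZMod (2*d+1)))).card = 2*d+1 := by
      rw [card_product, card_singleton, one_mul, card_univ, ZMod.card]
    omega
  calc ∑ s : Fin t, (M.filter fun e => e.1 = s).card
      ≤ ∑ _s : Fin t, d := sum_le_sum (fun s _ => hfib s)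
    _ = t * d := by rw [sum_const, card_univ, Fintype.card_fin, smul_eq_mul]

lemma jc_of_lt {d r : ℕ} (hd : 0 < d) (hr : r < d*(2*d+1)) : jc d r = r / (2*d+1) + 1 := by
  unfold jc; rw [Nat.mod_eq_of_lt hr]

lemma resid_inj {d : ℕ} {r r' : ℕ} (hr : r < d*(2*d+1)) (hr' : r' < d*(2*d+1))
    (h1 : ic d r = ic d r') (h2 : r / (2*d+1) = r' / (2*d+1)) : r = r' := by
  have hm1 : r % (2*d+1) < 2*d+1 := Nat.mod_lt _ (by omega)
  have hm2 : r' % (2*d+1) < 2*d+1 := Nat.mod_lt _ (by omega)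
  have h3 : ((r % (2*d+1) : ℕ) : ZMod (2*d+1)) = ((r' % (2*d+1) : ℕ) : ZMod (2*d+1)) := by
    unfold ic at h1
    rwa [Nat.mod_eq_of_lt hr, Nat.mod_eq_of_lt hr'] at h1
  have h4 := cast_inj hm1 hm2 h3
  have h5 := Nat.div_add_mod r (2*d+1)
  have h6 := Nat.div_add_mod r' (2*d+1)
  have h7 : (2*d+1) * (r / (2*d+1)) = (2*d+1) * (r' / (2*d+1)) := by rw [h2]
  omega

lemma card_BX {d : ℕ} (hd : 0 < d) {x y : ZMod (2*d+1)} (hxy : x ≠ y) :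
    ((range (d*(2*d+1))).filter (fun r => ic d r = x ∧
      ∃ k, k < d+2 ∧ (ends d r k = (x, y) ∨ ends d r k = (y, x)))).card ≤ 2 := by
  set BX := (range (d*(2*d+1))).filter (fun r => ic d r = x ∧
      ∃ k, k < d+2 ∧ (ends d r k = (x, y) ∨ ends d r k = (y, x))) with hBX
  have hstep : ∀ r ∈ BX, (x + ((jc d r : ℕ) : ZMod (2*d+1)) = y) ∨
      (x - ((jc d r : ℕ) : ZMod (2*d+1)) = y) := by
    intro r hr
    rw [hBX, mem_filter, mem_range] at hr
    obtain ⟨hrD, hic, k, hk, hE⟩ := hr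
    rcases ends_cases r k hE with ⟨hkd, hA⟩ | ⟨hkd, hA⟩ | ⟨hk1, hk2, hA⟩
    · exfalso
      rcases hA with ⟨h1, h2⟩ | ⟨h1, h2⟩
      · exact shift_add_ne_self _ (by omega) (by omega) (hic.trans h1).symm
      · exact shift_sub_ne_self _ (by omega) (by omega) (hic.trans h2).symm
    · rcases hA with ⟨h1, h2⟩ | ⟨h1, h2⟩
      · left; rw [← hic]; exact h2.symm
      · exact absurd (hic.symm.trans h1.symm) hxy
    · rcases hA with ⟨h1, h2⟩ | ⟨h1, h2⟩
      · right; rw [← hic]; exact h2.symm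
      · exact absurd (hic.symm.trans h1.symm) hxy
  have hj2' : ∀ r : ℕ, ((jc d r : ℕ) : ZMod (2*d+1)) = ((jc d r : ℕ) : ZMod (2*d+1)) := fun _ => rfl
  calc BX.card ≤ (univ : Finset Bool).card := ?_
    _ = 2 := by simp
  apply card_le_card_of_injOn
    (fun r => if x + ((jc d r : ℕ) : ZMod (2*d+1)) = y then true else false)
    (fun _ _ => mem_univ _)
  intro r hr r' hr' hb
  have h1 := hstep r (Finset.mem_coe.mp hr); have h2 := hstep r' (Finset.mem_coe.mp hr')
  have hrm := Finset.mem_coe.mp hr; have hrm' := Finset.mem_coe.mp hr'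
  rw [hBX, mem_filter, mem_range] at hrm hrm'
  obtain ⟨hrD, hic, -⟩ := hrm
  obtain ⟨hrD', hic', -⟩ := hrm'
  have hj1 := jc_ge d r; have hj2 := jc_le hd r
  have hj1' := jc_ge d r'; have hj2' := jc_le hd r'
  have hjj : jc d r = jc d r' := by
    by_cases hc1 : x + ((jc d r : ℕ) : ZMod (2*d+1)) = y
    · have hc2 : x + ((jc d r' : ℕ) : ZMod (2*d+1)) = y := by
        by_contra hc2
        simp only [if_pos hc1, if_neg hc2] at hb
        exact Bool.noConfusion hb
      exact shift_add_inj x (by omega) (by omega) (hc1.trans hc2.symm)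
    · have hc2 : ¬ (x + ((jc d r' : ℕ) : ZMod (2*d+1)) = y) := by
        intro hc2
        simp only [if_neg hc1, if_pos hc2] at hb
        exact Bool.noConfusion hb
      have hs1 := h1.resolve_left hc1
      have hs2 := h2.resolve_left hc2
      exact shift_sub_inj x (by omega) (by omega) (hs1.trans hs2.symm)
  apply resid_inj hrD hrD' (hic.trans hic'.symm)
  rw [jc_of_lt hd hrD, jc_of_lt hd hrD'] at hjj
  omega

lemma countE (d n t : ℕ) (hd : 0 < d) (u v : Vt d t) :
    ((univ : Finset (Eg d n t)).filter (fun e =>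
        (E1 d n t e = u ∧ E2 d n t e = v) ∨ (E1 d n t e = v ∧ E2 d n t e = u))).card
      ≤ (d+4) * (n/(d*(2*d+1)) + 1) := by
  set F := (univ : Finset (Eg d n t)).filter (fun e =>
        (E1 d n t e = u ∧ E2 d n t e = v) ∨ (E1 d n t e = v ∧ E2 d n t e = u)) with hF
  have hmem : ∀ e ∈ F, e.1 = u.1 ∧ e.1 = v.1 ∧
      (ends d e.2.1.val e.2.2.val = (u.2, v.2) ∨ ends d e.2.1.val e.2.2.val = (v.2, u.2)) := by
    intro e he
    rw [hF, mem_filter] at he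
    rcases he.2 with ⟨h1, h2⟩ | ⟨h1, h2⟩
    · have f1 : e.1 = u.1 := congrArg Prod.fst h1
      have f2 : e.1 = v.1 := congrArg Prod.fst h2
      have g1 : (ends d e.2.1.val e.2.2.val).1 = u.2 := congrArg Prod.snd h1
      have g2 : (ends d e.2.1.val e.2.2.val).2 = v.2 := congrArg Prod.snd h2
      exact ⟨f1, f2, Or.inl (Prod.ext_iff.mpr ⟨g1, g2⟩)⟩
    · have f1 : e.1 = v.1 := congrArg Prod.fst h1
      have f2 : e.1 = u.1 := congrArg Prod.fst h2
      have g1 : (ends d e.2.1.val e.2.2.val).1 = v.2 := congrArg Prod.snd h1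
      have g2 : (ends d e.2.1.val e.2.2.val).2 = u.2 := congrArg Prod.snd h2
      exact ⟨f2, f1, Or.inr (Prod.ext_iff.mpr ⟨g1, g2⟩)⟩
  by_cases hxy : u.2 = v.2
  · have hFe : F = ∅ := by
      rw [eq_empty_iff_forall_notMem]
      intro e he
      obtain ⟨h1, h2, h3⟩ := hmem e he
      refine ends_ne hd e.2.1.val e.2.2.val ?_
      rcases h3 with h | h
      · rw [congrArg Prod.fst h, congrArg Prod.snd h, hxy]
      · rw [congrArg Prod.fst h, congrArg Prod.snd h, hxy]
    rw [hFe, card_empty]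
    exact Nat.zero_le _
  · have hD0 : 0 < d*(2*d+1) := by positivity
    set A := (range (d*(2*d+1))).filter (fun r => ic d r + ic d r = u.2 + v.2) with hA
    set Bx := (range (d*(2*d+1))).filter (fun r => ic d r = u.2 ∧
      ∃ k, k < d+2 ∧ (ends d r k = (u.2, v.2) ∨ ends d r k = (v.2, u.2))) with hBx
    set By := (range (d*(2*d+1))).filter (fun r => ic d r = v.2 ∧
      ∃ k, k < d+2 ∧ (ends d r k = (v.2, u.2) ∨ ends d r k = (u.2, v.2))) with hBy
    have hinj : Set.InjOn
        (fun e : Eg d n t => (e.2.1.val % (d*(2*d+1)), e.2.1.val / (d*(2*d+1)))) F := by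
      intro e he e' he' hψ
      obtain ⟨he1, he2, he3⟩ := hmem e (Finset.mem_coe.mp he)
      obtain ⟨he1', he2', he3'⟩ := hmem e' (Finset.mem_coe.mp he')
      have hψ1 : e.2.1.val % (d*(2*d+1)) = e'.2.1.val % (d*(2*d+1)) := congrArg Prod.fst hψ
      have hψ2 : e.2.1.val / (d*(2*d+1)) = e'.2.1.val / (d*(2*d+1)) := congrArg Prod.snd hψ
      have hc : e.2.1 = e'.2.1 := by
        apply Fin.ext
        have h5 := Nat.div_add_mod e.2.1.val (d*(2*d+1))
        have h6 := Nat.div_add_mod e'.2.1.val (d*(2*d+1))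
        have h7 : (d*(2*d+1)) * (e.2.1.val / (d*(2*d+1)))
            = (d*(2*d+1)) * (e'.2.1.val / (d*(2*d+1))) := by rw [hψ2]
        omega
      have hk : e.2.2 = e'.2.2 := by
        apply Fin.ext
        rw [← hc] at he3'
        exact ends_k_unique hd e.2.2.isLt e'.2.2.isLt hxy he3 he3'
      exact Prod.ext_iff.mpr ⟨he1.trans he1'.symm, Prod.ext_iff.mpr ⟨hc, hk⟩⟩
    have hcover : F.image
        (fun e : Eg d n t => (e.2.1.val % (d*(2*d+1)), e.2.1.val / (d*(2*d+1))))
        ⊆ (A ∪ Bx ∪ By) ×ˢ range (n/(d*(2*d+1)) + 1) := by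
      intro p hp
      rw [mem_image] at hp
      obtain ⟨e, he, rfl⟩ := hp
      obtain ⟨he1, he2, he3⟩ := hmem e he
      rw [mem_product, mem_range]
      constructor
      · have hrD : e.2.1.val % (d*(2*d+1)) < d*(2*d+1) := Nat.mod_lt _ hD0
        have h3r : ends d (e.2.1.val % (d*(2*d+1))) e.2.2.val = (u.2, v.2) ∨
            ends d (e.2.1.val % (d*(2*d+1))) e.2.2.val = (v.2, u.2) := by
          rw [ends_mod d e.2.1.val]; exact he3
        rcases ends_cases _ _ h3r with ⟨hkd, hCA⟩ | ⟨hkd, hCA⟩ | ⟨hk1, hk2, hCA⟩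
        · refine mem_union_left _ (mem_union_left _ ?_)
          rw [hA, mem_filter, mem_range]
          refine ⟨hrD, ?_⟩
          rcases hCA with ⟨h1, h2⟩ | ⟨h1, h2⟩ <;> rw [h1, h2] <;> ring
        · rcases hCA with ⟨h1, h2⟩ | ⟨h1, h2⟩
          · refine mem_union_left _ (mem_union_right _ ?_)
            rw [hBx, mem_filter, mem_range]
            exact ⟨hrD, h1.symm, e.2.2.val, e.2.2.isLt, h3r⟩
          · refine mem_union_right _ ?_
            rw [hBy, mem_filter, mem_range]
            exact ⟨hrD, h1.symm, e.2.2.val, e.2.2.isLt, h3r.elim Or.inr Or.inl⟩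
        · rcases hCA with ⟨h1, h2⟩ | ⟨h1, h2⟩
          · refine mem_union_left _ (mem_union_right _ ?_)
            rw [hBx, mem_filter, mem_range]
            exact ⟨hrD, h1.symm, e.2.2.val, e.2.2.isLt, h3r⟩
          · refine mem_union_right _ ?_
            rw [hBy, mem_filter, mem_range]
            exact ⟨hrD, h1.symm, e.2.2.val, e.2.2.isLt, h3r.elim Or.inr Or.inl⟩
      · have := Nat.div_le_div_right (c := d*(2*d+1)) (Nat.le_of_lt e.2.1.isLt)
        omega
    have hcardA : A.card ≤ d := by
      calc A.card ≤ (range d).card := ?_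
        _ = d := card_range d
      apply card_le_card_of_injOn (fun r => r / (2*d+1))
      · intro r hrm
        simp only [Finset.mem_coe, hA, mem_filter, mem_range] at hrm
        simp only [Finset.mem_coe, mem_range]
        rw [Nat.div_lt_iff_lt_mul (by omega)]
        omega
      · intro r hr r' hr' hq
        have hram := Finset.mem_coe.mp hr; have hram' := Finset.mem_coe.mp hr'
        rw [hA, mem_filter, mem_range] at hram hram'
        obtain ⟨hrD, hsum⟩ := hram
        obtain ⟨hrD', hsum'⟩ := hram'
        have e1 : ic d r = ((r % (2*d+1) : ℕ) : ZMod (2*d+1)) := by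
          unfold ic; rw [Nat.mod_eq_of_lt hrD]
        have e2 : ic d r' = ((r' % (2*d+1) : ℕ) : ZMod (2*d+1)) := by
          unfold ic; rw [Nat.mod_eq_of_lt hrD']
        have h3 : ((2*(r % (2*d+1)) : ℕ) : ZMod (2*d+1)) = ((2*(r' % (2*d+1)) : ℕ) : ZMod (2*d+1)) := by
          push_cast
          rw [e1] at hsum
          rw [e2] at hsum'
          linear_combination hsum - hsum'
        have h4 : 2*(r % (2*d+1)) ≡ 2*(r' % (2*d+1)) [MOD 2*d+1] :=
          (ZMod.natCast_eq_natCast_iff _ _ _).mp h3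
        have h5 : r % (2*d+1) ≡ r' % (2*d+1) [MOD 2*d+1] :=
          Nat.ModEq.cancel_left_of_coprime
            (Nat.coprime_two_right.mpr ⟨d, by omega⟩) h4
        have h6 : r % (2*d+1) = r' % (2*d+1) := by
          have h7 := h5
          unfold Nat.ModEq at h7
          rwa [Nat.mod_mod_of_dvd r dvd_rfl, Nat.mod_mod_of_dvd r' dvd_rfl] at h7
        have hicic : ic d r = ic d r' := by rw [e1, e2, h6]
        exact resid_inj hrD hrD' hicic hq
    have hcardBx : Bx.card ≤ 2 := by rw [hBx]; exact card_BX hd hxy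
    have hcardBy : By.card ≤ 2 := by rw [hBy]; exact card_BX hd (Ne.symm hxy)
    have hcardU : (A ∪ Bx ∪ By).card ≤ d + 4 := by
      calc (A ∪ Bx ∪ By).card ≤ (A ∪ Bx).card + By.card := card_union_le _ _
        _ ≤ A.card + Bx.card + By.card := by
            have := card_union_le A Bx
            omega
        _ ≤ d + 4 := by omega
    calc F.card = (F.image _).card := (card_image_of_injOn hinj).symm
      _ ≤ ((A ∪ Bx ∪ By) ×ˢ range (n/(d*(2*d+1)) + 1)).card := card_le_card hcover
      _ = (A ∪ Bx ∪ By).card * (n/(d*(2*d+1)) + 1) := by rw [card_product, card_range]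
      _ ≤ (d+4) * (n/(d*(2*d+1)) + 1) := Nat.mul_le_mul_right _ hcardU

lemma arith (d n : ℕ) (hd : 2 ≤ d) (hn : 10 * (d:ℝ)^3 * Real.log d < (n:ℝ)) :
    (((d+4) * (n/(d*(2*d+1)) + 1) : ℕ) : ℝ) ≤ (n : ℝ)/(2*(d:ℝ)) + 10 * (n:ℝ) / (d:ℝ)^2 := by
  have hD : (2:ℝ) ≤ (d:ℝ) := by exact_mod_cast hd
  have hD0 : (0:ℝ) < (d:ℝ) := by linarith
  have hlog : Real.log 2 ≤ Real.log d := Real.log_le_log (by norm_num) hD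
  have h69 : (0.69:ℝ) < Real.log 2 := by
    have := Real.log_two_gt_d9; linarith
  have hlog69 : (0.69:ℝ) ≤ Real.log d := by linarith
  have hN : 6.9 * (d:ℝ)^3 ≤ (n:ℝ) := by
    nlinarith [pow_pos hD0 3]
  have hN0 : (0:ℝ) ≤ (n:ℝ) := by positivity
  have hpos1 : (0:ℝ) < (d:ℝ)*(2*(d:ℝ)+1) := by positivity
  have hpos2 : (0:ℝ) < 2*(d:ℝ) := by positivity
  have hpos3 : (0:ℝ) < (d:ℝ)^2 := by positivity
  have hle : ((n/(d*(2*d+1)) : ℕ) : ℝ) ≤ (n:ℝ) / ((d:ℝ)*(2*(d:ℝ)+1)) := by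
    have h1 : ((n/(d*(2*d+1)) : ℕ) : ℝ) ≤ ((n:ℕ):ℝ)/(((d*(2*d+1)):ℕ):ℝ) := Nat.cast_div_le
    have h2 : (((d*(2*d+1) : ℕ)) : ℝ) = (d:ℝ)*(2*(d:ℝ)+1) := by push_cast; ring
    rwa [h2] at h1
  have h1 : ((d:ℝ)+4)*((n:ℝ)/((d:ℝ)*(2*(d:ℝ)+1))) ≤ (n:ℝ)/(2*(d:ℝ)) + 2*(n:ℝ)/(d:ℝ)^2 := by
    rw [mul_div_assoc', div_add_div _ _ (ne_of_gt hpos2) (ne_of_gt hpos3),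
      div_le_div_iff₀ hpos1 (by positivity)]
    nlinarith [mul_nonneg hN0 (pow_nonneg hD0.le 3), mul_nonneg hN0 (sq_nonneg (d:ℝ)),
      mul_nonneg (mul_nonneg hN0 (pow_nonneg hD0.le 3)) hD0.le]
  have h2 : (d:ℝ)+4 ≤ 8*(n:ℝ)/(d:ℝ)^2 := by
    rw [le_div_iff₀ hpos3]
    nlinarith [mul_nonneg (sub_nonneg.mpr hD) (sq_nonneg (d:ℝ)),
      mul_le_mul_of_nonneg_left hN (by norm_num : (0:ℝ) ≤ 8)]
  calc (((d+4) * (n/(d*(2*d+1)) + 1) : ℕ) : ℝ)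
      = ((d:ℝ)+4) * (((n/(d*(2*d+1)) : ℕ) : ℝ) + 1) := by push_cast; ring
    _ ≤ ((d:ℝ)+4) * ((n:ℝ)/((d:ℝ)*(2*(d:ℝ)+1)) + 1) := by
        apply mul_le_mul_of_nonneg_left _ (by linarith)
        linarith
    _ = ((d:ℝ)+4)*((n:ℝ)/((d:ℝ)*(2*(d:ℝ)+1))) + ((d:ℝ)+4) := by ring
    _ ≤ ((n:ℝ)/(2*(d:ℝ)) + 2*(n:ℝ)/(d:ℝ)^2) + 8*(n:ℝ)/(d:ℝ)^2 := add_le_add h1 h2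
    _ = (n : ℝ)/(2*(d:ℝ)) + 10 * (n:ℝ) / (d:ℝ)^2 := by ring

end Stmt16Aux

open Stmt16Aux in
/-- for `d ≥ 2` and `n > 10 d³ log d` with `d ∣ n - 1`, there is an
`n`-edge-coloured multigraph whose colour classes are disjoint unions of
non-trivial cliques spanning at least `(2 + 1/d)(n-1)` vertices, with edge
multiplicity at most `n/(2d) + O(n/d²)`, and with no matching of size `n`. -/
theorem stmt_16 :
    ∃ K : ℝ, 0 < K ∧ ∀ d n : ℕ, 2 ≤ d →
      10 * (d : ℝ) ^ 3 * Real.log d < (n : ℝ) → d ∣ (n - 1) →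
      ∃ (NV NE : ℕ) (e₁ e₂ : Fin NE → Fin NV) (col : Fin NE → Fin n),
        (∀ e, e₁ e ≠ e₂ e) ∧
        (∀ c : Fin n, IsCliqueUnion e₁ e₂ col c ∧
          (2 + 1 / (d : ℝ)) * ((n : ℝ) - 1) ≤ ((spannedVerts e₁ e₂ col c).card : ℝ)) ∧
        (∀ u v : Fin NV,
          ((Finset.univ.filter fun e : Fin NE =>
            (e₁ e = u ∧ e₂ e = v) ∨ (e₁ e = v ∧ e₂ e = u)).card : ℝ) ≤
            (n : ℝ) / (2 * d) + K * (n : ℝ) / (d : ℝ) ^ 2) ∧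
        ¬ ∃ M : Finset (Fin NE), IsMatchingE e₁ e₂ M ∧ n ≤ M.card := by
  refine ⟨10, by norm_num, ?_⟩
  intro d n hd hn hdvd
  have hd0 : 0 < d := by omega
  have hD : (2:ℝ) ≤ (d:ℝ) := by exact_mod_cast hd
  have hn0 : 0 < n := by
    by_contra h
    have hz : n = 0 := by omega
    subst hz
    have h1 : (0:ℝ) < Real.log d := Real.log_pos (by linarith)
    have h2 : (0:ℝ) < (d:ℝ)^3 := by positivity
    simp only [Nat.cast_zero] at hn
    nlinarith
  set t := (n-1)/d with ht
  have htd : t * d = n - 1 := Nat.div_mul_cancel hdvd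
  set σ : Stmt16Aux.Vt d t ≃ Fin (t*(2*d+1)) :=
    (Equiv.prodCongr (Equiv.refl (Fin t))
      (Equiv.refl (Fin (2*d+1)) : ZMod (2*d+1) ≃ Fin (2*d+1))).trans finProdFinEquiv with hσ
  set τ : Stmt16Aux.Eg d n t ≃ Fin (t*(n*(d+2))) :=
    (Equiv.prodCongr (Equiv.refl (Fin t)) finProdFinEquiv).trans finProdFinEquiv with hτ
  refine ⟨t*(2*d+1), t*(n*(d+2)),
    fun e => σ (E1 d n t (τ.symm e)),
    fun e => σ (E2 d n t (τ.symm e)),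
    fun e => colE d n t (τ.symm e), ?_, ?_, ?_, ?_⟩
  · -- no loops
    intro e h
    exact E_ne d n t hd0 (τ.symm e) (σ.injective h)
  · -- clique union and spanning
    intro c
    have hadj : ∀ (u v : Fin (t*(2*d+1))),
        adjOfColour (fun e => σ (E1 d n t (τ.symm e))) (fun e => σ (E2 d n t (τ.symm e)))
          (fun e => colE d n t (τ.symm e)) c u v ↔
        adjOfColour (E1 d n t) (E2 d n t) (colE d n t) c (σ.symm u) (σ.symm v) := by
      intro u v
      unfold adjOfColour
      constructor
      · rintro ⟨hne, e, hc, h⟩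
        refine ⟨fun hh => hne (by rw [← Equiv.apply_symm_apply σ u, hh, Equiv.apply_symm_apply]),
          τ.symm e, hc, ?_⟩
        rcases h with ⟨h1, h2⟩ | ⟨h1, h2⟩
        · exact Or.inl ⟨(Equiv.eq_symm_apply σ).mpr h1, (Equiv.eq_symm_apply σ).mpr h2⟩
        · exact Or.inr ⟨(Equiv.eq_symm_apply σ).mpr h1, (Equiv.eq_symm_apply σ).mpr h2⟩
      · rintro ⟨hne, e', hc, h⟩
        refine ⟨fun hh => hne (by rw [hh]), τ e', ?_, ?_⟩
        · show colE d n t (τ.symm (τ e')) = c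
          rwa [Equiv.symm_apply_apply]
        · rcases h with ⟨h1, h2⟩ | ⟨h1, h2⟩
          · left
            constructor
            · show σ (E1 d n t (τ.symm (τ e'))) = u
              rw [Equiv.symm_apply_apply, h1, Equiv.apply_symm_apply]
            · show σ (E2 d n t (τ.symm (τ e'))) = v
              rw [Equiv.symm_apply_apply, h2, Equiv.apply_symm_apply]
          · right
            constructor
            · show σ (E1 d n t (τ.symm (τ e'))) = v
              rw [Equiv.symm_apply_apply, h1, Equiv.apply_symm_apply]
            · show σ (E2 d n t (τ.symm (τ e'))) = u
              rw [Equiv.symm_apply_apply, h2, Equiv.apply_symm_apply]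
    constructor
    · intro u v w h1 h2 hne
      rw [hadj] at h1 h2 ⊢
      refine cliqueE d n t hd0 c _ _ _ h1 h2 ?_
      intro hh
      exact hne (by rw [← Equiv.apply_symm_apply σ u, hh, Equiv.apply_symm_apply])
    · -- spanning
      have hspan : spannedVerts (fun e => σ (E1 d n t (τ.symm e)))
          (fun e => σ (E2 d n t (τ.symm e))) (fun e => colE d n t (τ.symm e)) c = univ := by
        apply Finset.eq_univ_of_forall
        intro v
        simp only [spannedVerts, mem_filter, mem_univ, true_and]
        obtain ⟨e', hc, h⟩ := spanE d n t hd0 c (σ.symm v)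
        refine ⟨τ e', ?_, ?_⟩
        · show colE d n t (τ.symm (τ e')) = c
          rwa [Equiv.symm_apply_apply]
        · rcases h with h | h
          · left
            show σ (E1 d n t (τ.symm (τ e'))) = v
            rw [Equiv.symm_apply_apply, h, Equiv.apply_symm_apply]
          · right
            show σ (E2 d n t (τ.symm (τ e'))) = v
            rw [Equiv.symm_apply_apply, h, Equiv.apply_symm_apply]
      rw [hspan, card_univ, Fintype.card_fin]
      have h1 : ((t:ℝ))*(d:ℝ) = (n:ℝ)-1 := by
        have h2 : ((t*d : ℕ) : ℝ) = ((n-1 : ℕ) : ℝ) := by exact_mod_cast congrArg Nat.cast htd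
        push_cast [Nat.cast_sub hn0] at h2
        linarith
      have hcast : ((t*(2*d+1) : ℕ) : ℝ) = (2+1/(d:ℝ))*((n:ℝ)-1) := by
        push_cast
        rw [← h1]
        field_simp
      rw [hcast]
  · -- multiplicity
    intro u v
    have hcount := countE d n t hd0 (σ.symm u) (σ.symm v)
    have hcardeq : ((univ : Finset (Fin (t*(n*(d+2))))).filter fun e =>
          (σ (E1 d n t (τ.symm e)) = u ∧ σ (E2 d n t (τ.symm e)) = v) ∨
          (σ (E1 d n t (τ.symm e)) = v ∧ σ (E2 d n t (τ.symm e)) = u)).card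
        = ((univ : Finset (Stmt16Aux.Eg d n t)).filter (fun e =>
          (E1 d n t e = σ.symm u ∧ E2 d n t e = σ.symm v) ∨
          (E1 d n t e = σ.symm v ∧ E2 d n t e = σ.symm u))).card := by
      apply Finset.card_bij (fun e _ => τ.symm e)
      · intro e he
        rw [mem_filter] at he ⊢
        refine ⟨mem_univ _, ?_⟩
        rcases he.2 with ⟨h1, h2⟩ | ⟨h1, h2⟩
        · exact Or.inl ⟨(Equiv.eq_symm_apply σ).mpr h1, (Equiv.eq_symm_apply σ).mpr h2⟩
        · exact Or.inr ⟨(Equiv.eq_symm_apply σ).mpr h1, (Equiv.eq_symm_apply σ).mpr h2⟩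
      · intro a _ b _ hab
        exact τ.symm.injective hab
      · intro e' he'
        refine ⟨τ e', ?_, by rw [Equiv.symm_apply_apply]⟩
        rw [mem_filter] at he' ⊢
        refine ⟨mem_univ _, ?_⟩
        rcases he'.2 with ⟨h1, h2⟩ | ⟨h1, h2⟩
        · left
          constructor
          · show σ (E1 d n t (τ.symm (τ e'))) = u
            rw [Equiv.symm_apply_apply, h1, Equiv.apply_symm_apply]
          · show σ (E2 d n t (τ.symm (τ e'))) = v
            rw [Equiv.symm_apply_apply, h2, Equiv.apply_symm_apply]
        · right
          constructor
          · show σ (E1 d n t (τ.symm (τ e'))) = v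
            rw [Equiv.symm_apply_apply, h1, Equiv.apply_symm_apply]
          · show σ (E2 d n t (τ.symm (τ e'))) = u
            rw [Equiv.symm_apply_apply, h2, Equiv.apply_symm_apply]
    rw [hcardeq]
    have hc2 : (((univ : Finset (Stmt16Aux.Eg d n t)).filter (fun e =>
          (E1 d n t e = σ.symm u ∧ E2 d n t e = σ.symm v) ∨
          (E1 d n t e = σ.symm v ∧ E2 d n t e = σ.symm u))).card : ℝ)
        ≤ (((d+4) * (n/(d*(2*d+1)) + 1) : ℕ) : ℝ) := by exact_mod_cast hcount
    calc _ ≤ (((d+4) * (n/(d*(2*d+1)) + 1) : ℕ) : ℝ) := hc2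
      _ ≤ (n : ℝ)/(2*(d:ℝ)) + 10 * (n:ℝ) / (d:ℝ)^2 := arith d n hd hn
      _ = (n : ℝ) / (2 * (d:ℝ)) + 10 * (n : ℝ) / (d : ℝ) ^ 2 := by ring
  · -- no large matching
    rintro ⟨M, hM, hMcard⟩
    have hmatch : IsMatchingE (E1 d n t) (E2 d n t) (M.image τ.symm) := by
      constructor
      · intro e' he'
        rw [mem_image] at he'
        obtain ⟨e, he, rfl⟩ := he'
        intro hh
        exact hM.1 e he (congrArg σ hh)
      · intro a ha b hb hab
        rw [mem_image] at ha hb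
        obtain ⟨a0, ha0, rfl⟩ := ha
        obtain ⟨b0, hb0, rfl⟩ := hb
        have hab0 : a0 ≠ b0 := fun h => hab (by rw [h])
        have hd2 := hM.2 a0 ha0 b0 hb0 hab0
        have him : ∀ e0 : Fin (t*(n*(d+2))),
            edgeEnds (fun e => σ (E1 d n t (τ.symm e))) (fun e => σ (E2 d n t (τ.symm e))) e0
            = (edgeEnds (E1 d n t) (E2 d n t) (τ.symm e0)).image σ := by
          intro e0
          unfold edgeEnds
          rw [Finset.image_insert, Finset.image_singleton]
        rw [him a0, him b0] at hd2
        exact (Finset.disjoint_image σ.injective).mp hd2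
    have hb := matchE d n t hd0 (M.image τ.symm) hmatch
    rw [Finset.card_image_of_injective _ τ.symm.injective] at hb
    omega
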